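/- Let a₁,…,a_k be positive integers with gcd(a₁,…,a_k)=1. Then the Sylvester sum s(a₁,…,a_k) = Σ_{n∈NR(a₁,…,a_k)} n equals (1/(2a₁))·Σ_{i=1}^{a₁−1} m_i² − (1/2)·Σ_{i=1}^{a₁−1} m_i + (a₁²−1)/12. -/

import Mathlib

open Finset

/-- `n` is representable as a nonnegative integer combination of the `a i`. -/
def Representable {k : ℕ} (a : Fin k → ℕ) (n : ℕ) : Prop :=
  ∃ x : Fin k → ℕ, n = ∑ i, x i * a i

/-- The set of positive integers that are not representable. -/
def NRset {k : ℕ} (a : Fin k → ℕ) : Set ℕ :=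
  {n | 0 < n ∧ ¬ Representable a n}

lemma rep_mul {k : ℕ} (a : Fin (k+1) → ℕ) (c : ℕ) : Representable a (c * a 0) := by
  refine ⟨fun t => if t = 0 then c else 0, ?_⟩
  simp [ite_mul]

lemma rep_add {k : ℕ} {a : Fin k → ℕ} {n n' : ℕ} (h : Representable a n)
    (h' : Representable a n') : Representable a (n + n') := by
  obtain ⟨x, rfl⟩ := h; obtain ⟨y, rfl⟩ := h'
  exact ⟨x + y, by simp [add_mul, Finset.sum_add_distrib]⟩

lemma sum_id_q (n : ℕ) : ∑ j ∈ range n, (j : ℚ) = n * (n - 1) / 2 := by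
  induction n with
  | zero => simp
  | succ n ih => rw [Finset.sum_range_succ, ih]; push_cast; ring

lemma sum_Icc_id_q (b : ℕ) : ∑ i ∈ Icc 1 b, (i : ℚ) = b * (b + 1) / 2 := by
  induction b with
  | zero => simp
  | succ b ih => rw [Finset.sum_Icc_succ_top (by omega), ih]; push_cast; ring

lemma sum_Icc_sq_q (b : ℕ) : ∑ i ∈ Icc 1 b, (i : ℚ) ^ 2 = b * (b + 1) * (2 * b + 1) / 6 := by
  induction b with
  | zero => simp
  | succ b ih => rw [Finset.sum_Icc_succ_top (by omega), ih]; push_cast; ring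

/-- The Sylvester sum `s(a₁,…,a_k)` equals
`(1/(2a₁))·Σ m_i² − (1/2)·Σ m_i + (a₁²−1)/12`. -/
theorem stmt2 {k : ℕ} (a : Fin (k + 1) → ℕ)
    (ha : ∀ i, 0 < a i)
    (hgcd : Finset.univ.gcd a = 1)
    (m : ℕ → ℕ)
    (hm : ∀ i ∈ Finset.Icc 1 (a 0 - 1),
      IsLeast {n : ℕ | 0 < n ∧ Representable a n ∧ n % (a 0) = i} (m i)) :
    ∑ᶠ n ∈ NRset a, (n : ℚ) =
      (1 / (2 * (a 0 : ℚ))) * ∑ i ∈ Finset.Icc 1 (a 0 - 1), (m i : ℚ) ^ 2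
        - (1 / 2) * ∑ i ∈ Finset.Icc 1 (a 0 - 1), (m i : ℚ)
        + ((a 0 : ℚ) ^ 2 - 1) / 12 := by
  have ha0 : 0 < a 0 := ha 0
  have ha0q : (a 0 : ℚ) ≠ 0 := by exact_mod_cast ha0.ne'
  set T : ℕ → Finset ℕ := fun i => (range (m i)).filter (fun n => n % a 0 = i) with hT
  set S : Finset ℕ := (Icc 1 (a 0 - 1)).biUnion T with hS
  -- NRset equals S
  have hset : NRset a = ↑S := by
    ext n
    simp only [hS, hT, Finset.coe_biUnion, Set.mem_iUnion, Finset.mem_coe, mem_filter,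
      mem_range, Finset.mem_Icc, NRset, Set.mem_setOf_eq]
    constructor
    · rintro ⟨hn, hrep⟩
      have hi0 : n % a 0 ≠ 0 := by
        intro h0
        exact hrep (by
          have : n = n / a 0 * a 0 := (Nat.div_mul_cancel (Nat.dvd_of_mod_eq_zero h0)).symm
          rw [this]; exact rep_mul a _)
      have hilt : n % a 0 < a 0 := Nat.mod_lt n ha0
      have hiIcc : n % a 0 ∈ Icc 1 (a 0 - 1) := by simp [Finset.mem_Icc]; omega
      refine ⟨n % a 0, ⟨by omega, by omega⟩, ?_, rfl⟩
      by_contra hge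
      push_neg at hge
      obtain ⟨⟨hmpos, hmrep, hmmod⟩, hleast⟩ := hm _ hiIcc
      set q := n / a 0
      set t := m (n % a 0) / a 0
      have hq : a 0 * q + n % a 0 = n := Nat.div_add_mod n (a 0)
      have ht : a 0 * t + n % a 0 = m (n % a 0) := by
        conv_rhs => rw [← Nat.div_add_mod (m (n % a 0)) (a 0), hmmod]
      have htq : t ≤ q := by
        by_contra hc
        push_neg at hc
        have := (Nat.mul_lt_mul_left ha0).mpr hc
        omega
      have hsum : a 0 * q = a 0 * t + a 0 * (q - t) := by
        rw [← Nat.mul_add, Nat.add_sub_cancel' htq]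
      have hcomm : (q - t) * a 0 = a 0 * (q - t) := Nat.mul_comm _ _
      have hn' : n = m (n % a 0) + (q - t) * a 0 := by omega
      exact hrep (hn' ▸ rep_add hmrep (rep_mul a (q - t)))
    · rintro ⟨i, ⟨h1, h2⟩, hlt, hmod⟩
      have hpos : 0 < n := by
        rcases Nat.eq_zero_or_pos n with h | h
        · subst h; simp at hmod; omega
        · exact h
      refine ⟨hpos, fun hrep => ?_⟩
      have := (hm i (by simp [Finset.mem_Icc]; omega)).2 ⟨hpos, hrep, hmod⟩
      omega
  rw [hset, finsum_mem_coe_finset, hS]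
  have hdisj : (↑(Icc 1 (a 0 - 1)) : Set ℕ).PairwiseDisjoint T := by
    intro i _ j _ hij
    simp only [Function.onFun, hT, Finset.disjoint_left, mem_filter, mem_range]
    rintro n ⟨_, h1⟩ ⟨_, h2⟩
    exact hij (h1 ▸ h2 ▸ rfl)
  rw [Finset.sum_biUnion hdisj]
  -- per-residue sum
  have perI : ∀ i ∈ Icc 1 (a 0 - 1), (∑ n ∈ T i, (n : ℚ)) =
      (1 / (2 * (a 0 : ℚ))) * (m i : ℚ) ^ 2 - (1 / 2) * (m i : ℚ)
        + ((i : ℚ) / 2 - (i : ℚ) ^ 2 / (2 * (a 0 : ℚ))) := by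
    intro i hi
    rw [Finset.mem_Icc] at hi
    have hilt : i < a 0 := by omega
    obtain ⟨⟨hmpos, hmrep, hmmod⟩, hleast⟩ := hm i (by simp [Finset.mem_Icc]; omega)
    set t := m i / a 0 with htdef
    have hmi : m i = a 0 * t + i := by
      conv_lhs => rw [← Nat.div_add_mod (m i) (a 0), hmmod]
    have himg : T i = (range t).image (fun j => a 0 * j + i) := by
      ext n
      simp only [hT, mem_filter, mem_range, mem_image]
      constructor
      · rintro ⟨hlt, hmod'⟩
        refine ⟨n / a 0, ?_, ?_⟩
        · have h1 : a 0 * (n / a 0) + i = n := by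
            conv_rhs => rw [← Nat.div_add_mod n (a 0), hmod']
          have : a 0 * (n / a 0) < a 0 * t := by omega
          exact Nat.lt_of_mul_lt_mul_left this
        · conv_rhs => rw [← Nat.div_add_mod n (a 0), hmod']
      · rintro ⟨j, hj, rfl⟩
        constructor
        · have := (Nat.mul_lt_mul_left ha0).mpr hj
          omega
        · rw [Nat.mul_add_mod, Nat.mod_eq_of_lt hilt]
    rw [himg, Finset.sum_image (by
      intro x _ y _ h
      exact Nat.eq_of_mul_eq_mul_left ha0 (by dsimp only at h; omega))]
    have hcalc : ∑ j ∈ range t, ((a 0 * j + i : ℕ) : ℚ)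
        = (a 0 : ℚ) * ((t : ℚ) * ((t : ℚ) - 1) / 2) + (t : ℚ) * (i : ℚ) := by
      push_cast
      rw [Finset.sum_add_distrib, ← Finset.mul_sum, sum_id_q, Finset.sum_const,
        Finset.card_range, nsmul_eq_mul]
    rw [hcalc]
    have hmq : (m i : ℚ) = (a 0 : ℚ) * (t : ℚ) + (i : ℚ) := by exact_mod_cast hmi
    rw [hmq]
    field_simp
    ring
  rw [Finset.sum_congr rfl perI]
  rw [Finset.sum_add_distrib, Finset.sum_sub_distrib, ← Finset.mul_sum, ← Finset.mul_sum]
  congr 1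
  have hb : (a 0 : ℚ) = ((a 0 - 1 : ℕ) : ℚ) + 1 := by
    have : a 0 - 1 + 1 = a 0 := by omega
    exact_mod_cast (congrArg (Nat.cast : ℕ → ℚ) this).symm
  have hd : ∑ i ∈ Icc 1 (a 0 - 1), ((i : ℚ) / 2 - (i : ℚ) ^ 2 / (2 * (a 0 : ℚ)))
      = (∑ i ∈ Icc 1 (a 0 - 1), (i : ℚ)) / 2
        - (∑ i ∈ Icc 1 (a 0 - 1), (i : ℚ) ^ 2) / (2 * (a 0 : ℚ)) := by
    rw [Finset.sum_sub_distrib, Finset.sum_div, Finset.sum_div]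
  rw [hd, sum_Icc_id_q, sum_Icc_sq_q, hb]
  have hb1 : ((a 0 - 1 : ℕ) : ℚ) + 1 ≠ 0 := by positivity
  field_simp
  ring
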